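/- arXiv:1511.03564 — 2 statements merged into one kernel-verified Lean document; each statement's English description precedes it below -/
import Mathlib

section
/- Let A = {α₁,…,αₙ} be an orthogonal set of nonzero functions in L²[0,T] and let h₁, h₂ ∈ L^∞[0,T] be such that both {α₁h₁,…,αₙh₁} and {α₁h₂,…,αₙh₂} are orthogonal in L²[0,T]. If s ∈ L^∞[0,T] satisfies s² = h₁² + h₂² a.e., then {α₁s,…,αₙs} is also orthogonal in L²[0,T], with ‖αⱼs‖₂² = ‖αⱼh₁‖₂² + ‖αⱼh₂‖₂² for each j. -/
open MeasureTheory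

/-- The `L²[0,T]` inner product `(f,g)₂ = ∫₀ᵀ f(t) g(t) dt`. -/
noncomputable def innerL2 (T : ℝ) (f g : ℝ → ℝ) : ℝ := ∫ t in Set.Icc (0:ℝ) T, f t * g t

theorem stmt6 (T : ℝ) (hT : 0 < T) (n : ℕ) (α : Fin n → ℝ → ℝ)
    (hαmeas : ∀ j, Measurable (α j))
    (hαL2 : ∀ j, MemLp (α j) 2 (volume.restrict (Set.Icc 0 T)))
    (hαne : ∀ j, 0 < innerL2 T (α j) (α j))
    (hαorth : ∀ i j, i ≠ j → innerL2 T (α i) (α j) = 0)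
    (h₁ h₂ s : ℝ → ℝ)
    (hmeas₁ : Measurable h₁) (hmeas₂ : Measurable h₂) (hmeass : Measurable s)
    (hbdd₁ : ∃ C, ∀ t, |h₁ t| ≤ C) (hbdd₂ : ∃ C, ∀ t, |h₂ t| ≤ C)
    (hbdds : ∃ C, ∀ t, |s t| ≤ C)
    (horth₁ : ∀ i j, i ≠ j →
      innerL2 T (fun t => α i t * h₁ t) (fun t => α j t * h₁ t) = 0)
    (horth₂ : ∀ i j, i ≠ j →
      innerL2 T (fun t => α i t * h₂ t) (fun t => α j t * h₂ t) = 0)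
    (hrel : ∀ᵐ t ∂(volume.restrict (Set.Icc 0 T)), (s t) ^ 2 = (h₁ t) ^ 2 + (h₂ t) ^ 2) :
    (∀ i j, i ≠ j →
      innerL2 T (fun t => α i t * s t) (fun t => α j t * s t) = 0) ∧
    (∀ j, innerL2 T (fun t => α j t * s t) (fun t => α j t * s t)
      = innerL2 T (fun t => α j t * h₁ t) (fun t => α j t * h₁ t)
        + innerL2 T (fun t => α j t * h₂ t) (fun t => α j t * h₂ t)) := by
  set μ := volume.restrict (Set.Icc (0:ℝ) T) with hμ
  have hαα : ∀ i j : Fin n, Integrable (fun t => α i t * α j t) μ := by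
    intro i j
    have h1 : MemLp (fun t => α i t * α j t) 1 μ := by
      have := MemLp.smul (r := 1) (hαL2 j) (hαL2 i) (hpqr := ⟨by simp [ENNReal.inv_two_add_inv_two]⟩)
      exact this
    exact memLp_one_iff_integrable.mp h1
  have hint : ∀ (i j : Fin n) (h : ℝ → ℝ), Measurable h → (∃ C, ∀ t, |h t| ≤ C) →
      Integrable (fun t => α i t * α j t * (h t)^2) μ := by
    rintro i j h hm ⟨C, hC⟩
    have hb : ∀ t, ‖(h t)^2‖ ≤ C^2 := fun t => by
      rw [Real.norm_eq_abs, abs_pow]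
      nlinarith [hC t, abs_nonneg (h t)]
    have h2 : Integrable (fun t => (h t)^2 * (α i t * α j t)) μ :=
      (hαα i j).bdd_mul ((hm.pow_const 2).aestronglyMeasurable) (Filter.Eventually.of_forall hb)
    exact h2.congr (Filter.Eventually.of_forall fun t => by ring)
  have key : ∀ i j : Fin n,
      innerL2 T (fun t => α i t * s t) (fun t => α j t * s t)
      = innerL2 T (fun t => α i t * h₁ t) (fun t => α j t * h₁ t)
        + innerL2 T (fun t => α i t * h₂ t) (fun t => α j t * h₂ t) := by
    intro i j
    have e1 : innerL2 T (fun t => α i t * s t) (fun t => α j t * s t)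
        = ∫ t, α i t * α j t * (h₁ t)^2 + α i t * α j t * (h₂ t)^2 ∂μ := by
      rw [innerL2]
      apply integral_congr_ae
      filter_upwards [hrel] with t ht
      have e : (α i t * s t) * (α j t * s t) = α i t * α j t * (s t)^2 := by ring
      rw [e, ht]; ring
    have e2 : innerL2 T (fun t => α i t * h₁ t) (fun t => α j t * h₁ t)
        = ∫ t, α i t * α j t * (h₁ t)^2 ∂μ := by
      rw [innerL2]; congr 1; funext t; ring
    have e3 : innerL2 T (fun t => α i t * h₂ t) (fun t => α j t * h₂ t)
        = ∫ t, α i t * α j t * (h₂ t)^2 ∂μ := by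
      rw [innerL2]; congr 1; funext t; ring
    rw [e1, e2, e3, integral_add (hint i j h₁ hmeas₁ hbdd₁) (hint i j h₂ hmeas₂ hbdd₂)]
  constructor
  · intro i j hij
    rw [key i j, horth₁ i j hij, horth₂ i j hij, add_zero]
  · intro j; exact key j j
end

section
/- Let A = {α₁,…,αₙ} be an orthogonal set in L²[0,T]. Then the set O_∞(A) of nonzero h ∈ L^∞[0,T] with Ah orthogonal in L²[0,T] is closed under the rotation operation: if h₁, h₂ ∈ O_∞(A) ∪ {0} and s² = h₁² + h₂² a.e. with s ∈ L^∞[0,T], then s ∈ O_∞(A) ∪ {0}. -/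
open MeasureTheory

/-- Membership in `O_∞(A) ∪ {0}`: `h` is an essentially bounded measurable function which
is either (scale-invariant) zero or has positive `L²`-norm, and in either case
`Ah = {α₁h,…,αₙh}` is an orthogonal family in `L²[0,T]`. -/
def MemOInftyZero (T : ℝ) {n : ℕ} (α : Fin n → ℝ → ℝ) (h : ℝ → ℝ) : Prop :=
  Measurable h ∧ (∃ C, ∀ t, |h t| ≤ C) ∧
    (∀ i j, i ≠ j → innerL2 T (fun t => α i t * h t) (fun t => α j t * h t) = 0)

set_option maxHeartbeats 1000000 in
theorem stmt7 (T : ℝ) (hT : 0 < T) (n : ℕ) (α : Fin n → ℝ → ℝ)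
    (hαmeas : ∀ j, Measurable (α j))
    (hαL2 : ∀ j, MemLp (α j) 2 (volume.restrict (Set.Icc 0 T)))
    (hαorth : ∀ i j, i ≠ j → innerL2 T (α i) (α j) = 0)
    (h₁ h₂ s : ℝ → ℝ)
    (hh₁ : MemOInftyZero T α h₁) (hh₂ : MemOInftyZero T α h₂)
    (hmeass : Measurable s) (hbdds : ∃ C, ∀ t, |s t| ≤ C)
    (hrel : ∀ᵐ t ∂(volume.restrict (Set.Icc 0 T)), (s t) ^ 2 = (h₁ t) ^ 2 + (h₂ t) ^ 2) :
    MemOInftyZero T α s := by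
  obtain ⟨hm₁, hb₁, ho₁⟩ := hh₁
  obtain ⟨hm₂, hb₂, ho₂⟩ := hh₂
  refine ⟨hmeass, hbdds, fun i j hij => ?_⟩
  set μ := volume.restrict (Set.Icc (0:ℝ) T)
  have hαint : Integrable (fun t => α i t * α j t) μ := by
    have : MemLp (α i • α j) 1 μ :=
      (hαL2 j).smul (hαL2 i)
        (hpqr := ⟨by simp [one_div, ENNReal.inv_two_add_inv_two]⟩)
    have := memLp_one_iff_integrable.mp this
    exact this
  have key : ∀ (h : ℝ → ℝ), Measurable h → (∃ C, ∀ t, |h t| ≤ C) →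
      Integrable (fun t => α i t * α j t * (h t) ^ 2) μ := by
    intro h hm ⟨C, hC⟩
    have hbd : Integrable (fun t => (h t) ^ 2 * (α i t * α j t)) μ := by
      refine hαint.bdd_mul ((hm.pow_const 2).aestronglyMeasurable) (c := C ^ 2) (Filter.Eventually.of_forall fun t => ?_)
      have : |h t ^ 2| ≤ C ^ 2 := by
        rw [abs_pow]
        exact pow_le_pow_left₀ (abs_nonneg _) (hC t) 2
      simpa [Real.norm_eq_abs] using this
    exact hbd.congr (by filter_upwards with t; ring)
  have eq1 : ∀ (h : ℝ → ℝ),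
      innerL2 T (fun t => α i t * h t) (fun t => α j t * h t)
        = ∫ t, α i t * α j t * (h t) ^ 2 ∂μ := by
    intro h
    unfold innerL2
    apply integral_congr_ae
    filter_upwards with t
    ring
  rw [eq1]
  have hrel' : (fun t => α i t * α j t * (s t) ^ 2)
      =ᵐ[μ] fun t => α i t * α j t * (h₁ t) ^ 2 + α i t * α j t * (h₂ t) ^ 2 := by
    filter_upwards [hrel] with t ht
    rw [ht]; ring
  rw [integral_congr_ae hrel',
    integral_add (key h₁ hm₁ hb₁) (key h₂ hm₂ hb₂),
    ← eq1 h₁, ← eq1 h₂, ho₁ i j hij, ho₂ i j hij, add_zero]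
end
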